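/- Let there be n items and m bins, sizes s_{ij} ∈ ℝ≥0 ∪ {+∞} for item i in bin j, capacities G_j ∈ ℝ≥0, and a real g ≥ 0. Suppose x ∈ ℝ≥0^{n×m} satisfies: ∑_{j=1}^m x_{ij} = 1 for every item i; ∑_{i=1}^n s_{ij} x_{ij} ≤ G_j for every bin j; and x_{ij} = 0 whenever s_{ij} > g. Then there exists an integral assignment x' ∈ {0,1}^{n×m} such that ∑_{j=1}^m x'_{ij} = 1 for every item i; ∑_{i=1}^n s_{ij} x'_{ij} ≤ G_j + g for every bin j; and x'_{ij} = 1 implies x_{ij} > 0. -/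

import Mathlib

open scoped ENNReal NNReal

namespace LSTaux

/-- clip `y` to the interval `[t, t+1]`. -/
def clipR (t : ℕ) (y : ℝ) : ℝ := min (max y t) (t + 1)

lemma clip_mono (t : ℕ) : Monotone (clipR t) := fun a b h => by
  unfold clipR
  exact min_le_min (max_le_max h le_rfl) le_rfl

lemma le_clip (t : ℕ) (y : ℝ) : (t : ℝ) ≤ clipR t y := by
  unfold clipR
  refine le_min (le_max_right _ _) (by linarith)

lemma clip_le (t : ℕ) (y : ℝ) : clipR t y ≤ (t : ℝ) + 1 := min_le_right _ _

lemma clip_of_ge {t : ℕ} {y : ℝ} (h : (t : ℝ) + 1 ≤ y) : clipR t y = (t : ℝ) + 1 := by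
  unfold clipR
  rw [max_eq_left (by linarith), min_eq_right h]

lemma clip_of_le {t : ℕ} {y : ℝ} (h : y ≤ (t : ℝ)) : clipR t y = (t : ℝ) := by
  unfold clipR
  rw [max_eq_right h, min_eq_left (by linarith)]

lemma clip_zero (t : ℕ) : clipR t 0 = (t : ℝ) := clip_of_le (by positivity)

lemma clipSum (N : ℕ) (y : ℝ) (h0 : 0 ≤ y) (hN : y ≤ N) :
    ∑ t ∈ Finset.range N, (clipR t y - t) = y := by
  induction N with
  | zero => simp at hN ⊢; linarith
  | succ N ih =>
    rw [Finset.sum_range_succ]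
    by_cases hy : y ≤ (N : ℝ)
    · rw [ih hy, clip_of_le hy]; ring
    · push_neg at hy
      have h1 : ∑ t ∈ Finset.range N, (clipR t y - t) = N := by
        have : ∀ t ∈ Finset.range N, clipR t y - (t : ℝ) = 1 := by
          intro t ht
          have ht' := Finset.mem_range.mp ht
          have h2 : (t : ℝ) + 1 ≤ y := by
            have : (t : ℝ) + 1 ≤ (N : ℝ) := by exact_mod_cast Nat.succ_le_of_lt ht'
            linarith
          rw [clip_of_ge h2]; ring
        rw [Finset.sum_congr rfl this, Finset.sum_const, Finset.card_range]; simp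
      rw [h1]
      have hyN : y ≤ (N : ℝ) + 1 := by push_cast at hN; linarith
      unfold clipR
      rw [max_eq_left (by linarith), min_eq_left hyN]
      ring



lemma clip_gt {t : ℕ} {y : ℝ} (h : (t : ℝ) < clipR t y) : (t : ℝ) < y := by
  by_contra hy
  push_neg at hy
  rw [clip_of_le hy] at h
  exact lt_irrefl _ h

lemma clip_lt {t : ℕ} {y : ℝ} (h : clipR t y < (t : ℝ) + 1) : y < (t : ℝ) + 1 := by
  by_contra hy
  push_neg at hy
  rw [clip_of_ge hy] at h
  exact lt_irrefl _ h

section core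

variable {n m : ℕ} (s : Fin (n+1) → Fin m → ℝ≥0∞) (x : Fin (n+1) → Fin m → ℝ≥0)

/-- permutation sorting the items by nonincreasing size in bin `j`. -/
noncomputable def σf (j : Fin m) : Equiv.Perm (Fin (n+1)) :=
  Tuple.sort (fun i => OrderDual.toDual (s i j))

lemma σf_antitone (j : Fin m) {k k' : Fin (n+1)} (h : k ≤ k') :
    s (σf s j k') j ≤ s (σf s j k) j :=
  Tuple.monotone_sort (fun i => OrderDual.toDual (s i j)) h

/-- prefix sums of the sorted fractional masses in bin `j`. -/
noncomputable def Pf (j : Fin m) (c : ℕ) : ℝ :=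
  ∑ l : Fin (n+1), if (l : ℕ) < c then (x (σf s j l) j : ℝ) else 0

lemma Pf_zero (j : Fin m) : Pf s x j 0 = 0 := by simp [Pf]

lemma Pf_nonneg (j : Fin m) (c : ℕ) : 0 ≤ Pf s x j c :=
  Finset.sum_nonneg fun l _ => by positivity

lemma Pf_mono (j : Fin m) {a b : ℕ} (h : a ≤ b) : Pf s x j a ≤ Pf s x j b := by
  refine Finset.sum_le_sum fun l _ => ?_
  by_cases hl : (l : ℕ) < a
  · rw [if_pos hl, if_pos (lt_of_lt_of_le hl h)]
  · rw [if_neg hl]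
    by_cases hl' : (l : ℕ) < b
    · rw [if_pos hl']; positivity
    · rw [if_neg hl']

lemma Pf_step (j : Fin m) (k : Fin (n+1)) :
    Pf s x j ((k : ℕ) + 1) = Pf s x j (k : ℕ) + (x (σf s j k) j : ℝ) := by
  unfold Pf
  have : ∀ l : Fin (n+1), (if (l : ℕ) < (k : ℕ) + 1 then (x (σf s j l) j : ℝ) else 0)
      = (if (l : ℕ) < (k : ℕ) then (x (σf s j l) j : ℝ) else 0)
        + (if l = k then (x (σf s j k) j : ℝ) else 0) := by
    intro l
    by_cases h : l = k
    · subst h; rw [if_pos (by omega), if_neg (by omega), if_pos rfl]; ring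
    · have hv : (l : ℕ) ≠ (k : ℕ) := fun hv => h (Fin.ext hv)
      rw [if_neg h]
      by_cases h2 : (l : ℕ) < (k : ℕ)
      · rw [if_pos (by omega), if_pos h2]; ring
      · rw [if_neg (by omega), if_neg h2]; ring
  rw [Finset.sum_congr rfl fun l _ => this l, Finset.sum_add_distrib,
    Finset.sum_ite_eq' Finset.univ k (fun _ => (x (σf s j k) j : ℝ)),
    if_pos (Finset.mem_univ k)]

lemma Pf_le (j : Fin m) (hsum : ∀ i, ∑ j', x i j' = 1) (c : ℕ) :
    Pf s x j c ≤ (n + 1 : ℝ) := by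
  have hx1 : ∀ i, (x i j : ℝ) ≤ 1 := by
    intro i
    have : x i j ≤ ∑ j', x i j' :=
      Finset.single_le_sum (fun _ _ => zero_le) (Finset.mem_univ j)
    rw [hsum i] at this
    exact_mod_cast this
  calc Pf s x j c ≤ ∑ _l : Fin (n+1), (1 : ℝ) := by
        refine Finset.sum_le_sum fun l _ => ?_
        by_cases hl : (l : ℕ) < c
        · rw [if_pos hl]; exact hx1 _
        · rw [if_neg hl]; norm_num
    _ = (n + 1 : ℝ) := by simp

/-- the fractional mass of the item in sorted position `k` that lands in slot `t` of bin `j`. -/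
noncomputable def massf (j : Fin m) (k : Fin (n+1)) (t : ℕ) : ℝ :=
  clipR t (Pf s x j ((k : ℕ) + 1)) - clipR t (Pf s x j (k : ℕ))

lemma massf_nonneg (j : Fin m) (k : Fin (n+1)) (t : ℕ) : 0 ≤ massf s x j k t :=
  sub_nonneg.mpr (clip_mono t (Pf_mono s x j (Nat.le_succ _)))

lemma massf_sum_t (hsum : ∀ i, ∑ j', x i j' = 1) (j : Fin m) (k : Fin (n+1)) :
    ∑ t ∈ Finset.range (n+1), massf s x j k t = (x (σf s j k) j : ℝ) := by
  unfold massf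
  have h1 : ∀ c : ℕ, c ≤ n + 1 →
      ∑ t ∈ Finset.range (n+1), clipR t (Pf s x j c)
        = Pf s x j c + ∑ t ∈ Finset.range (n+1), (t : ℝ) := by
    intro c hc
    have := clipSum (n+1) (Pf s x j c) (Pf_nonneg s x j c)
      (le_trans (Pf_le s x j hsum c) (by push_cast; norm_num))
    rw [Finset.sum_sub_distrib] at this
    linarith
  rw [Finset.sum_sub_distrib, h1 _ (by omega), h1 _ (by omega), Pf_step]
  ring

lemma massf_sum_k (j : Fin m) (t : ℕ) :
    ∑ k : Fin (n+1), massf s x j k t = clipR t (Pf s x j (n+1)) - (t : ℝ) := by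
  have := Finset.sum_range_sub (fun c => clipR t (Pf s x j c)) (n+1)
  unfold massf
  rw [Fin.sum_univ_eq_sum_range (fun k => clipR t (Pf s x j (k + 1)) - clipR t (Pf s x j k))]
  simpa [clip_zero, Pf_zero] using this

lemma massf_le_x (hsum : ∀ i, ∑ j', x i j' = 1) (j : Fin m) (k : Fin (n+1)) {t : ℕ}
    (ht : t < n + 1) : massf s x j k t ≤ (x (σf s j k) j : ℝ) := by
  rw [← massf_sum_t s x hsum j k]
  exact Finset.single_le_sum (fun t' _ => massf_nonneg s x j k t')
    (Finset.mem_range.mpr ht)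

end core

end LSTaux

/-- The rounding theorem of Lenstra, Shmoys and Tardos: a feasible fractional solution of
`LP(g)` (sizes `s i j ∈ ℝ≥0 ∪ {+∞}`, capacities `G j`, where no item is fractionally
assigned to a bin in which its size exceeds `g`) can be rounded to an integral assignment
violating each bin capacity by at most `g`, and assigning each item only to bins where
its fractional value was positive. -/
theorem lenstra_shmoys_tardos_rounding (n m : ℕ)
    (s : Fin n → Fin m → ℝ≥0∞) (G : Fin m → ℝ≥0) (g : ℝ≥0)
    (x : Fin n → Fin m → ℝ≥0)
    (hsum : ∀ i, ∑ j, x i j = 1)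
    (hcap : ∀ j, ∑ i, s i j * (x i j : ℝ≥0∞) ≤ (G j : ℝ≥0∞))
    (hbig : ∀ i j, (g : ℝ≥0∞) < s i j → x i j = 0) :
    ∃ x' : Fin n → Fin m → ℝ≥0,
      (∀ i j, x' i j = 0 ∨ x' i j = 1) ∧
      (∀ i, ∑ j, x' i j = 1) ∧
      (∀ j, ∑ i, s i j * (x' i j : ℝ≥0∞) ≤ (G j : ℝ≥0∞) + (g : ℝ≥0∞)) ∧
      (∀ i j, x' i j = 1 → 0 < x i j) := by
  classical
  rcases n with _ | n
  · exact ⟨fun _ _ => 0, fun i => i.elim0, fun i => i.elim0,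
      fun j => by simp, fun i => i.elim0⟩
  open LSTaux in
  -- the bipartite relation between items and (bin, slot) pairs
  set R : Fin (n+1) → Finset (Fin m × Fin (n+1)) := fun i =>
    Finset.univ.filter fun p => 0 < massf s x p.1 ((σf s p.1).symm i) (p.2 : ℕ) with hR
  -- Hall's condition
  have hhall : ∀ S : Finset (Fin (n+1)), S.card ≤ (S.biUnion R).card := by
    intro S
    have hle : (S.card : ℝ) ≤ ((S.biUnion R).card : ℝ) := by
      have hone : ∀ i : Fin (n+1), ∑ p : Fin m × Fin (n+1),
          massf s x p.1 ((σf s p.1).symm i) (p.2 : ℕ) = 1 := by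
        intro i
        rw [Fintype.sum_prod_type]
        have hj : ∀ j' : Fin m, ∑ t : Fin (n+1),
            massf s x j' ((σf s j').symm i) (t : ℕ) = (x i j' : ℝ) := by
          intro j'
          rw [Fin.sum_univ_eq_sum_range (fun t => massf s x j' ((σf s j').symm i) t),
            massf_sum_t s x hsum j' _]
          rw [Equiv.apply_symm_apply]
        rw [Finset.sum_congr rfl fun j' _ => hj j']
        have := hsum i
        have : ((∑ j', x i j' : ℝ≥0) : ℝ) = ((1 : ℝ≥0) : ℝ) := by rw [this]
        push_cast at this
        simpa using this
      calc (S.card : ℝ) = ∑ _i ∈ S, (1 : ℝ) := by simp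
        _ = ∑ i ∈ S, ∑ p : Fin m × Fin (n+1),
              massf s x p.1 ((σf s p.1).symm i) (p.2 : ℕ) :=
            Finset.sum_congr rfl fun i _ => (hone i).symm
        _ = ∑ p : Fin m × Fin (n+1), ∑ i ∈ S,
              massf s x p.1 ((σf s p.1).symm i) (p.2 : ℕ) := Finset.sum_comm
        _ = ∑ p ∈ S.biUnion R, ∑ i ∈ S,
              massf s x p.1 ((σf s p.1).symm i) (p.2 : ℕ) := by
            refine (Finset.sum_subset (Finset.subset_univ _) ?_).symm
            intro p _ hp
            refine Finset.sum_eq_zero fun i hi => ?_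
            have hnR : p ∉ R i := fun h => hp (Finset.mem_biUnion.mpr ⟨i, hi, h⟩)
            rw [hR] at hnR
            simp only [Finset.mem_filter, Finset.mem_univ, true_and, not_lt] at hnR
            exact le_antisymm hnR (massf_nonneg s x _ _ _)
        _ ≤ ∑ _p ∈ S.biUnion R, (1 : ℝ) := by
            refine Finset.sum_le_sum fun p _ => ?_
            calc ∑ i ∈ S, massf s x p.1 ((σf s p.1).symm i) (p.2 : ℕ)
                ≤ ∑ i : Fin (n+1), massf s x p.1 ((σf s p.1).symm i) (p.2 : ℕ) :=
                  Finset.sum_le_sum_of_subset_of_nonneg (Finset.subset_univ _)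
                    (fun i _ _ => massf_nonneg s x _ _ _)
              _ = ∑ k : Fin (n+1), massf s x p.1 k (p.2 : ℕ) :=
                  Equiv.sum_comp (σf s p.1).symm (fun k => massf s x p.1 k (p.2 : ℕ))
              _ = clipR (p.2 : ℕ) (Pf s x p.1 (n+1)) - ((p.2 : ℕ) : ℝ) :=
                  massf_sum_k s x p.1 (p.2 : ℕ)
              _ ≤ 1 := by
                  have := clip_le (p.2 : ℕ) (Pf s x p.1 (n+1)); linarith
        _ = ((S.biUnion R).card : ℝ) := by simp
    exact_mod_cast hle
  obtain ⟨f, hfinj, hfR⟩ :=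
    (Finset.all_card_le_biUnion_card_iff_existsInjective' R).mp hhall
  have hfmass : ∀ i, 0 < massf s x (f i).1 ((σf s (f i).1).symm i) ((f i).2 : ℕ) := by
    intro i
    have := hfR i
    rw [hR] at this
    simpa using this
  -- positivity of the fractional value on the chosen bin
  have hxpos : ∀ i, 0 < x i (f i).1 := by
    intro i
    have h1 := hfmass i
    have h2 : massf s x (f i).1 ((σf s (f i).1).symm i) ((f i).2 : ℕ)
        ≤ (x (σf s (f i).1 ((σf s (f i).1).symm i)) (f i).1 : ℝ) :=
      massf_le_x s x hsum (f i).1 _ (f i).2.isLt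
    rw [Equiv.apply_symm_apply] at h2
    have : (0 : ℝ) < (x i (f i).1 : ℝ) := lt_of_lt_of_le h1 h2
    exact_mod_cast this
  have hsg : ∀ i, s i (f i).1 ≤ (g : ℝ≥0∞) := by
    intro i
    by_contra h
    push_neg at h
    have h0 := hbig i (f i).1 h
    have h1 := hxpos i
    rw [h0] at h1
    exact lt_irrefl _ h1
  refine ⟨fun i j => if (f i).1 = j then 1 else 0, ?_, ?_, ?_, ?_⟩
  · intro i j
    by_cases h : (f i).1 = j <;> simp [h]
  · intro i
    simp
  · -- the capacity bound
    intro j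
    have hrw : ∀ i, s i j * ((if (f i).1 = j then (1:ℝ≥0) else 0 : ℝ≥0) : ℝ≥0∞)
        = if (f i).1 = j then s i j else 0 := by
      intro i; by_cases h : (f i).1 = j <;> simp [h]
    rw [Finset.sum_congr rfl fun i _ => hrw i, ← Finset.sum_filter]
    set A : Finset (Fin (n+1)) := Finset.univ.filter fun i => (f i).1 = j with hA
    -- L t : the fractional load of slot t of bin j
    set L : ℕ → ℝ≥0∞ := fun t =>
      ∑ k : Fin (n+1), s (σf s j k) j * ENNReal.ofReal (massf s x j k t) with hL
    set c : Fin (n+1) → ℝ≥0∞ := fun u =>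
      if (u : ℕ) = 0 then (g : ℝ≥0∞) else L ((u : ℕ) - 1) with hc
    -- main claim : each assigned item's size is bounded by c of its slot
    have hkey : ∀ i ∈ A, s i j ≤ c (f i).2 := by
      intro i hi
      rw [hA] at hi
      have hji : (f i).1 = j := (Finset.mem_filter.mp hi).2
      have hm : 0 < massf s x j ((σf s j).symm i) ((f i).2 : ℕ) := by
        have := hfmass i; rwa [hji] at this
      simp only [hc]
      by_cases hu : ((f i).2 : ℕ) = 0
      · rw [if_pos hu]
        have := hsg i; rwa [hji] at this
      · rw [if_neg hu]
        set u : ℕ := ((f i).2 : ℕ) - 1 with hu'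
        have huu : ((f i).2 : ℕ) = u + 1 := by omega
        set k : Fin (n+1) := (σf s j).symm i with hk
        have hki : σf s j k = i := Equiv.apply_symm_apply _ i
        rw [huu] at hm
        -- the prefix sum beyond position k exceeds u+1
        have hPk1 : ((u : ℝ) + 1) < Pf s x j ((k : ℕ) + 1) := by
          have h1 : ((u+1 : ℕ) : ℝ) ≤ clipR (u+1) (Pf s x j (k : ℕ)) := le_clip _ _
          have h2 : ((u+1 : ℕ) : ℝ) < clipR (u+1) (Pf s x j ((k : ℕ) + 1)) := by
            have := hm; unfold massf at this; linarith
          have := clip_gt h2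
          push_cast at this
          linarith
        -- slot u of bin j is completely full
        have hfull : ∑ k' : Fin (n+1), massf s x j k' u = 1 := by
          rw [massf_sum_k]
          have hPn : ((u : ℝ) + 1) ≤ Pf s x j (n+1) := by
            have := Pf_mono s x j (show (k : ℕ) + 1 ≤ n + 1 by omega)
            linarith
          rw [clip_of_ge (by push_cast; linarith)]
          push_cast; ring
        -- every item with mass in slot u is at least as large as item i
        have hdom : ∀ k' : Fin (n+1), 0 < massf s x j k' u → s i j ≤ s (σf s j k') j := by
          intro k' hk'
          by_contra hlt
          push_neg at hlt
          have hkk : k < k' := by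
            by_contra hle
            push_neg at hle
            have := σf_antitone s j hle
            rw [hki] at this
            exact absurd this (not_le.mpr hlt)
          have h1 : clipR u (Pf s x j (k' : ℕ)) < ((u : ℝ) + 1) := by
            have h2 : clipR u (Pf s x j ((k' : ℕ) + 1)) ≤ (u : ℝ) + 1 := clip_le _ _
            unfold massf at hk'
            linarith
          have h3 : Pf s x j (k' : ℕ) < (u : ℝ) + 1 := clip_lt h1
          have h4 : Pf s x j ((k : ℕ) + 1) ≤ Pf s x j (k' : ℕ) :=
            Pf_mono s x j (by exact_mod_cast hkk)
          linarith
        -- conclude : s i j is at most the fractional load of slot u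
        calc s i j = s i j * ENNReal.ofReal (∑ k' : Fin (n+1), massf s x j k' u) := by
              rw [hfull]; simp
          _ = s i j * ∑ k' : Fin (n+1), ENNReal.ofReal (massf s x j k' u) := by
              rw [ENNReal.ofReal_sum_of_nonneg fun k' _ => massf_nonneg s x j k' u]
          _ = ∑ k' : Fin (n+1), s i j * ENNReal.ofReal (massf s x j k' u) :=
              Finset.mul_sum _ _ _
          _ ≤ ∑ k' : Fin (n+1), s (σf s j k') j * ENNReal.ofReal (massf s x j k' u) := by
              refine Finset.sum_le_sum fun k' _ => ?_
              rcases (massf_nonneg s x j k' u).lt_or_eq with h | h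
              · exact mul_le_mul_left (hdom k' h) _
              · rw [← h]; simp
          _ = L u := by simp only [hL]
    -- sum up
    have hstep1 : ∑ i ∈ A, s i j ≤ ∑ i ∈ A, c (f i).2 := Finset.sum_le_sum hkey
    have hinj2 : ∀ i ∈ A, ∀ i' ∈ A, (f i).2 = (f i').2 → i = i' := by
      intro i hi i' hi' h2
      rw [hA] at hi hi'
      refine hfinj (Prod.ext ?_ h2)
      rw [(Finset.mem_filter.mp hi).2, (Finset.mem_filter.mp hi').2]
    have hstep2 : ∑ i ∈ A, c (f i).2 ≤ ∑ u : Fin (n+1), c u := by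
      rw [← Finset.sum_image hinj2]
      exact Finset.sum_le_sum_of_subset (Finset.subset_univ _)
    have hstep3 : ∑ u : Fin (n+1), c u = (g : ℝ≥0∞) + ∑ u : Fin n, L (u : ℕ) := by
      rw [Fin.sum_univ_succ]
      have h0 : c 0 = (g : ℝ≥0∞) := by simp [hc]
      have hsucc : ∀ u : Fin n, c u.succ = L (u : ℕ) := by
        intro u
        simp only [hc, Fin.val_succ]
        rw [if_neg (by omega)]
        norm_num
      rw [h0, Finset.sum_congr rfl fun u _ => hsucc u]
    have hstep4 : ∑ u : Fin n, L (u : ℕ) ≤ ∑ t ∈ Finset.range (n+1), L t := by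
      rw [Fin.sum_univ_eq_sum_range (fun t => L t) n]
      exact Finset.sum_le_sum_of_subset (Finset.range_subset_range.mpr (Nat.le_succ n))
    have hstep5 : ∑ t ∈ Finset.range (n+1), L t ≤ (G j : ℝ≥0∞) := by
      simp only [hL]
      rw [Finset.sum_comm]
      calc ∑ k : Fin (n+1), ∑ t ∈ Finset.range (n+1),
              s (σf s j k) j * ENNReal.ofReal (massf s x j k t)
          = ∑ k : Fin (n+1), s (σf s j k) j * (x (σf s j k) j : ℝ≥0∞) := by
            refine Finset.sum_congr rfl fun k _ => ?_
            rw [← Finset.mul_sum,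
              ← ENNReal.ofReal_sum_of_nonneg fun t _ => massf_nonneg s x j k t,
              massf_sum_t s x hsum j k, ENNReal.ofReal_coe_nnreal]
        _ = ∑ i, s i j * (x i j : ℝ≥0∞) :=
            Equiv.sum_comp (σf s j) (fun i => s i j * (x i j : ℝ≥0∞))
        _ ≤ (G j : ℝ≥0∞) := hcap j
    calc ∑ i ∈ A, s i j ≤ (g : ℝ≥0∞) + ∑ t ∈ Finset.range (n+1), L t := by
          refine le_trans hstep1 (le_trans hstep2 ?_)
          rw [hstep3]
          exact add_le_add_right hstep4 _
      _ ≤ (g : ℝ≥0∞) + (G j : ℝ≥0∞) := add_le_add_right hstep5 _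
      _ = (G j : ℝ≥0∞) + (g : ℝ≥0∞) := add_comm _ _
  · intro i j h1
    have h1' : (if (f i).1 = j then (1 : ℝ≥0) else 0) = 1 := h1
    by_cases h : (f i).1 = j
    · rw [← h]; exact hxpos i
    · rw [if_neg h] at h1'
      exact (zero_ne_one h1').elim
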